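/- Let T be the 3x3 real matrix (2/5)[[3,1,1],[1,3,1],[1,1,3]]. For every (a,b,c) in R^3, writing (x,y,z)^T = T (a,b,c)^T, one has: ab + bc + ca = 0 if and only if 11(x+y+z)^2 = 25(x^2+y^2+z^2), and ab + bc + ca >= 0 if and only if 11(x+y+z)^2 >= 25(x^2+y^2+z^2). -/

import Mathlib

open Matrix

/-- The matrix `T = (2/5)[[3,1,1],[1,3,1],[1,1,3]]` transforming coefficient triples of
energy measures into triples of values on the three level-1 cells. -/
noncomputable def Tmat : Matrix (Fin 3) (Fin 3) ℝ :=
  (2 / 5 : ℝ) • !![3, 1, 1; 1, 3, 1; 1, 1, 3]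

/-- For every `(a,b,c) ∈ ℝ³`, writing `(x,y,z)ᵀ = T (a,b,c)ᵀ`:
`ab + bc + ca = 0 ↔ 11(x+y+z)² = 25(x²+y²+z²)`, and
`ab + bc + ca ≥ 0 ↔ 11(x+y+z)² ≥ 25(x²+y²+z²)`. -/
theorem stmt_3 (a b c x y z : ℝ)
    (hx : x = (Tmat *ᵥ ![a, b, c]) 0)
    (hy : y = (Tmat *ᵥ ![a, b, c]) 1)
    (hz : z = (Tmat *ᵥ ![a, b, c]) 2) :
    (a * b + b * c + c * a = 0 ↔
      11 * (x + y + z) ^ 2 = 25 * (x ^ 2 + y ^ 2 + z ^ 2)) ∧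
    (a * b + b * c + c * a ≥ 0 ↔
      11 * (x + y + z) ^ 2 ≥ 25 * (x ^ 2 + y ^ 2 + z ^ 2)) := by
  simp only [Tmat, mulVec, dotProduct, Fin.sum_univ_three, Matrix.smul_apply, of_apply,
    cons_val', cons_val_zero, cons_val_one, head_cons, empty_val', cons_val_fin_one,
    head_fin_const, cons_val_two, tail_cons, smul_eq_mul] at hx hy hz
  subst hx hy hz
  constructor
  · constructor <;> intro h <;> nlinarith [h]
  · constructor <;> intro h <;> nlinarith [h]
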